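/- Let X_1,…,X_n be fixed real symmetric d×d matrices, 𝒜 ⊆ ℝ a finite set, and m ≥ n+1. Then there exists a Lebesgue-null set 𝒞 ⊆ ℝᵐ such that for all λ = (λ_1,…,λ_m) ∉ 𝒞, all z ∈ ℝⁿ, and all A ∈ 𝒜^{n×m}, at least one of the matrices M_j = −Σ_{i=1}^n z_i X_i A_{ij} + λ_j I_d (j ∈ [m]) is nonsingular. -/

import Mathlib

open MeasureTheory Finset

private lemma opBound' {d : ℕ} (M : Matrix (Fin d) (Fin d) ℝ) :
    ∃ K : ℝ, 0 ≤ K ∧ ∀ v : EuclideanSpace ℝ (Fin d),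
      ‖Matrix.toEuclideanLin M v‖ ≤ K * ‖v‖ :=
  ⟨‖LinearMap.toContinuousLinearMap (Matrix.toEuclideanLin M)‖, norm_nonneg _, fun v =>
    (LinearMap.toContinuousLinearMap (Matrix.toEuclideanLin M)).le_opNorm v⟩

private lemma keyA' {d : ℕ} {B : Matrix (Fin d) (Fin d) ℝ} (hB : B.IsHermitian) (lam c : ℝ)
    (v : EuclideanSpace ℝ (Fin d)) (hv : v ≠ 0)
    (h : ‖lam • v - Matrix.toEuclideanLin B v‖ ≤ c * ‖v‖) :
    ∃ i, |lam - hB.eigenvalues i| ≤ c := by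
  have hd : Nonempty (Fin d) := by
    by_contra hne
    rw [not_nonempty_iff] at hne
    exact hv (PiLp.ext fun i => absurd ⟨i⟩ (not_nonempty_iff.mpr hne))
  set e := hB.eigenvectorBasis with he
  have hTei : ∀ i, Matrix.toEuclideanLin B (e i) = hB.eigenvalues i • e i := by
    intro i
    apply (WithLp.equiv 2 (Fin d → ℝ)).injective
    rw [WithLp.equiv_apply, Matrix.ofLp_toEuclideanLin_apply]
    exact hB.mulVec_eigenvectorBasis i
  have hsymT : (Matrix.toEuclideanLin B).IsSymmetric := Matrix.isHermitian_iff_isSymmetric.mp hB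
  set w := lam • v - Matrix.toEuclideanLin B v with hw
  have hwi : ∀ i, e.repr w i = (lam - hB.eigenvalues i) * e.repr v i := by
    intro i
    rw [e.repr_apply_apply, e.repr_apply_apply, hw, inner_sub_right, real_inner_smul_right,
      ← hsymT (e i) v, hTei i, real_inner_smul_left]
    ring
  have hw2 : ‖w‖ ^ 2 = ∑ i, ((lam - hB.eigenvalues i) * e.repr v i) ^ 2 := by
    rw [← e.repr.norm_map w, PiLp.norm_sq_eq_of_L2]
    simp_rw [Real.norm_eq_abs, sq_abs, hwi]
  have hv2 : ‖v‖ ^ 2 = ∑ i, (e.repr v i) ^ 2 := by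
    rw [← e.repr.norm_map v, PiLp.norm_sq_eq_of_L2]
    simp_rw [Real.norm_eq_abs, sq_abs]
  obtain ⟨i₀, -, hmin⟩ := Finset.exists_min_image Finset.univ
    (fun i => |lam - hB.eigenvalues i|) univ_nonempty
  refine ⟨i₀, ?_⟩
  by_contra hgt
  push_neg at hgt
  have hsum : (lam - hB.eigenvalues i₀) ^ 2 * ‖v‖ ^ 2 ≤ ‖w‖ ^ 2 := by
    rw [hw2, hv2, Finset.mul_sum]
    apply Finset.sum_le_sum
    intro i _
    rw [mul_pow]
    apply mul_le_mul_of_nonneg_right _ (sq_nonneg _)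
    rw [← sq_abs (lam - hB.eigenvalues i₀), ← sq_abs (lam - hB.eigenvalues i)]
    exact pow_le_pow_left₀ (abs_nonneg _) (hmin i (mem_univ i)) 2
  have hvpos : 0 < ‖v‖ := norm_pos_iff.mpr hv
  rw [← sq_abs (lam - hB.eigenvalues i₀)] at hsum
  set aa := |lam - hB.eigenvalues i₀| with haa
  rcases lt_or_ge c 0 with hc | hc
  · nlinarith [norm_nonneg w]
  · have h1 : ‖w‖ ^ 2 ≤ (c * ‖v‖) ^ 2 := pow_le_pow_left₀ (norm_nonneg w) h 2
    have h2 : c ^ 2 < aa ^ 2 := pow_lt_pow_left₀ hgt hc (by norm_num)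
    have h3 := mul_lt_mul_of_pos_right h2 (pow_pos hvpos 2)
    rw [mul_pow] at h1
    linarith

private lemma symmSum' {n d : ℕ} (X : Fin n → Matrix (Fin d) (Fin d) ℝ)
    (hX : ∀ i, (X i).IsSymm) (c : Fin n → ℝ) : (∑ i, c i • X i).IsHermitian := by
  have h : (∑ i, c i • X i).IsSymm := by
    rw [Matrix.IsSymm, Matrix.transpose_sum]
    simp_rw [Matrix.transpose_smul]
    exact Finset.sum_congr rfl fun i _ => by rw [(hX i).eq]
  rw [Matrix.IsHermitian, Matrix.conjTranspose]
  ext i j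
  simpa using congrFun (congrFun h.eq i) j

private lemma keynull' {n m d : ℕ} (hm : n + 1 ≤ m)
    (X : Fin n → Matrix (Fin d) (Fin d) ℝ) (hX : ∀ i, (X i).IsSymm)
    (a : Fin n → Fin m → ℝ) (Ab : ℝ) (hAb : ∀ i j, |a i j| ≤ Ab) (R : ℕ) :
    volume {lam : Fin m → ℝ | ∃ z : Fin n → ℝ, (∀ i, |z i| ≤ (R : ℝ)) ∧
      ∀ j, (lam j • (1 : Matrix (Fin d) (Fin d) ℝ) - ∑ i, (z i * a i j) • X i).det = 0} = 0 := by
  classical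
  have hm0 : 0 < m := by omega
  set T := fun (M : Matrix (Fin d) (Fin d) ℝ) => Matrix.toEuclideanLin M with hT
  set S : (Fin n → ℝ) → Fin m → Matrix (Fin d) (Fin d) ℝ :=
    fun z j => ∑ i, (z i * a i j) • X i with hSdef
  have hS : ∀ z j, (S z j).IsHermitian := fun z j => symmSum' X hX _
  obtain ⟨K, hK0, hK⟩ : ∃ K : Fin n → ℝ, (∀ i, 0 ≤ K i) ∧
      ∀ i (v : EuclideanSpace ℝ (Fin d)), ‖T (X i) v‖ ≤ K i * ‖v‖ := by
    choose K h1 h2 using fun i => opBound' (X i)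
    exact ⟨K, h1, h2⟩
  have hAb0 : ∀ _ : Fin n, 0 ≤ Ab := fun i => le_trans (abs_nonneg _) (hAb i ⟨0, hm0⟩)
  set L := ∑ i, Ab * K i with hL
  have hL0 : 0 ≤ L := Finset.sum_nonneg fun i _ => mul_nonneg (hAb0 i) (hK0 i)
  have hLip : ∀ (z z' : Fin n → ℝ) (δ : ℝ), 0 ≤ δ → (∀ i, |z i - z' i| ≤ δ) →
      ∀ (j : Fin m) (v : EuclideanSpace ℝ (Fin d)),
        ‖T (S z j) v - T (S z' j) v‖ ≤ L * δ * ‖v‖ := by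
    intro z z' δ hδ0 hδ j v
    have hdiff : S z j - S z' j = ∑ i, ((z i - z' i) * a i j) • X i := by
      rw [hSdef, ← Finset.sum_sub_distrib]
      exact Finset.sum_congr rfl fun i _ => by rw [← sub_smul, ← sub_mul]
    have h1 : T (S z j) v - T (S z' j) v = ∑ i, ((z i - z' i) * a i j) • (T (X i) v) := by
      have h2 := congrArg (fun M => T M v) hdiff
      simp only [hT, map_sub, map_sum, _root_.map_smul, LinearMap.sub_apply, LinearMap.sum_apply,
        LinearMap.smul_apply] at h2 ⊢
      exact h2
    rw [h1]
    calc ‖∑ i, ((z i - z' i) * a i j) • (T (X i) v)‖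
        ≤ ∑ i, ‖((z i - z' i) * a i j) • (T (X i) v)‖ := norm_sum_le _ _
      _ ≤ ∑ i, (Ab * K i) * (δ * ‖v‖) := by
          apply Finset.sum_le_sum
          intro i _
          rw [norm_smul, Real.norm_eq_abs, abs_mul]
          calc |z i - z' i| * |a i j| * ‖T (X i) v‖
              ≤ (δ * Ab) * (K i * ‖v‖) := by
                apply mul_le_mul
                · exact mul_le_mul (hδ i) (hAb i j) (abs_nonneg _) hδ0
                · exact hK i v
                · exact norm_nonneg _
                · exact mul_nonneg hδ0 (hAb0 i)
            _ = (Ab * K i) * (δ * ‖v‖) := by ring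
      _ = L * δ * ‖v‖ := by rw [hL, ← Finset.sum_mul]; ring
  set P := ((d : ℝ) * (2 * L * (R : ℝ))) ^ m with hP
  have hP0 : 0 ≤ P := pow_nonneg (by positivity) m
  set C := (3 : ℝ) ^ n * P with hC
  have key : ∀ N : ℕ, 1 ≤ N →
      volume {lam : Fin m → ℝ | ∃ z : Fin n → ℝ, (∀ i, |z i| ≤ (R : ℝ)) ∧
        ∀ j, (lam j • (1 : Matrix (Fin d) (Fin d) ℝ) - S z j).det = 0}
        ≤ ENNReal.ofReal (C / N) := by
    intro N hN
    have hNpos : (0 : ℝ) < N := by exact_mod_cast hN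
    set δ := (R : ℝ) / N with hδ
    have hδ0 : 0 ≤ δ := by positivity
    set zk : (Fin n → ℤ) → Fin n → ℝ := fun k i => δ * k i with hzk
    set G := (Fintype.piFinset fun _ : Fin n => Finset.Icc (-(N : ℤ)) (N : ℤ)) with hG
    set U : (Fin n → ℤ) → Fin m → Set ℝ :=
      fun k j => ⋃ i : Fin d, Metric.closedBall ((hS (zk k) j).eigenvalues i) (L * δ) with hU
    have cover : {lam : Fin m → ℝ | ∃ z : Fin n → ℝ, (∀ i, |z i| ≤ (R : ℝ)) ∧
        ∀ j, (lam j • (1 : Matrix (Fin d) (Fin d) ℝ) - S z j).det = 0}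
        ⊆ ⋃ k ∈ G, Set.pi Set.univ (U k) := by
      rintro lam ⟨z, hz, hdet⟩
      set k : Fin n → ℤ := fun i => round (z i * N / R) with hk
      have hxb : ∀ i, |z i * N / R| ≤ (N : ℝ) := by
        intro i
        rcases Nat.eq_zero_or_pos R with hR | hR
        · have hzi : z i = 0 := by
            have h4 := hz i; rw [hR] at h4
            exact abs_nonpos_iff.mp (by simpa using h4)
          simp [hzi, hNpos.le]
        · have hRpos : (0 : ℝ) < R := by exact_mod_cast hR
          rw [abs_div, abs_mul, abs_of_pos hRpos, abs_of_pos hNpos, div_le_iff₀ hRpos]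
          calc |z i| * N ≤ (R : ℝ) * N := mul_le_mul_of_nonneg_right (hz i) hNpos.le
            _ = N * R := by ring
      have happrox : ∀ i, |z i - zk k i| ≤ δ := by
        intro i
        rcases Nat.eq_zero_or_pos R with hR | hR
        · have hzi : z i = 0 := by
            have h4 := hz i; rw [hR] at h4
            exact abs_nonpos_iff.mp (by simpa using h4)
          simp [hzk, hk, hzi, hR, hδ0]
        · have hRpos : (0 : ℝ) < R := by exact_mod_cast hR
          have heq : z i - zk k i = δ * (z i * N / R - k i) := by
            rw [hzk, hδ]
            field_simp
          rw [heq, abs_mul, abs_of_nonneg hδ0]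
          have h1 : |z i * N / R - (k i : ℝ)| ≤ 1 / 2 := by
            rw [hk]; exact abs_sub_round _
          nlinarith
      have hkG : k ∈ G := by
        rw [hG, Fintype.mem_piFinset]
        intro i
        rw [Finset.mem_Icc]
        have h1 : |z i * N / R - (k i : ℝ)| ≤ 1 / 2 := by rw [hk]; exact abs_sub_round _
        have h2 : |(k i : ℝ)| ≤ (N : ℝ) + 1 / 2 := by
          have h4 := abs_sub_abs_le_abs_sub (k i : ℝ) (z i * N / R)
          rw [abs_sub_comm] at h4
          linarith [hxb i]
        have h3 : |k i| ≤ (N : ℤ) := by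
          by_contra hcon
          push_neg at hcon
          have h5 : ((N : ℤ) + 1 : ℤ) ≤ |k i| := hcon
          have h6 : ((N : ℝ) + 1) ≤ |(k i : ℝ)| := by
            rw [← Int.cast_abs]
            exact_mod_cast h5
          linarith
        exact abs_le.mp h3
      refine Set.mem_biUnion hkG ?_
      intro j _
      have hdj := hdet j
      obtain ⟨v, hv0, hv⟩ := (Matrix.exists_mulVec_eq_zero_iff).mpr hdj
      set vE : EuclideanSpace ℝ (Fin d) := (WithLp.equiv 2 (Fin d → ℝ)).symm v with hvE
      have hvE0 : vE ≠ 0 := by simpa [hvE] using hv0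
      have h0 : T (lam j • (1 : Matrix (Fin d) (Fin d) ℝ) - S z j) vE = 0 := by
        rw [hT, hvE, WithLp.equiv_symm_apply, Matrix.toEuclideanLin_apply_piLp_toLp, hv]
        rfl
      have hone : T (lam j • (1 : Matrix (Fin d) (Fin d) ℝ)) vE = lam j • vE := by
        show Matrix.toEuclideanLin (lam j • (1 : Matrix (Fin d) (Fin d) ℝ)) vE = lam j • vE
        apply (WithLp.equiv 2 (Fin d → ℝ)).injective
        rw [WithLp.equiv_apply, Matrix.ofLp_toEuclideanLin_apply, Matrix.smul_mulVec,
          Matrix.one_mulVec]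
        rfl
      have h0' : lam j • vE - T (S z j) vE = 0 := by
        rw [← hone]
        calc T (lam j • (1 : Matrix (Fin d) (Fin d) ℝ)) vE - T (S z j) vE
            = T (lam j • (1 : Matrix (Fin d) (Fin d) ℝ) - S z j) vE := by
              show Matrix.toEuclideanLin (lam j • (1 : Matrix (Fin d) (Fin d) ℝ)) vE
                  - Matrix.toEuclideanLin (S z j) vE
                = Matrix.toEuclideanLin (lam j • (1 : Matrix (Fin d) (Fin d) ℝ) - S z j) vE
              rw [map_sub]
              rfl
          _ = 0 := h0
      have hb : ‖lam j • vE - T (S (zk k) j) vE‖ ≤ (L * δ) * ‖vE‖ := by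
        have heq2 : lam j • vE - T (S (zk k) j) vE = T (S z j) vE - T (S (zk k) j) vE := by
          rw [sub_eq_zero.mp h0']
        rw [heq2]
        exact hLip z (zk k) δ hδ0 happrox j vE
      obtain ⟨i, hi⟩ := keyA' (hS (zk k) j) (lam j) (L * δ) vE hvE0 hb
      exact Set.mem_iUnion.mpr ⟨i, by rw [Metric.mem_closedBall, Real.dist_eq]; exact hi⟩
    have hcard : G.card = (2 * N + 1) ^ n := by
      rw [hG, Fintype.card_piFinset]
      have h8 : (Finset.Icc (-(N : ℤ)) (N : ℤ)).card = 2 * N + 1 := by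
        rw [Int.card_Icc]
        omega
      simp [h8]
    calc volume {lam : Fin m → ℝ | ∃ z : Fin n → ℝ, (∀ i, |z i| ≤ (R : ℝ)) ∧
          ∀ j, (lam j • (1 : Matrix (Fin d) (Fin d) ℝ) - S z j).det = 0}
        ≤ volume (⋃ k ∈ G, Set.pi Set.univ (U k)) := measure_mono cover
      _ ≤ ∑ k ∈ G, volume (Set.pi Set.univ (U k)) := measure_biUnion_finset_le G _
      _ ≤ ∑ _k ∈ G, ENNReal.ofReal ((d : ℝ) * (2 * (L * δ))) ^ m := by
          apply Finset.sum_le_sum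
          intro k _
          rw [volume_pi_pi]
          have hj : ∀ j : Fin m, volume (U k j) ≤ ENNReal.ofReal ((d : ℝ) * (2 * (L * δ))) := by
            intro j
            calc volume (U k j)
                ≤ ∑ i : Fin d, volume (Metric.closedBall ((hS (zk k) j).eigenvalues i) (L * δ)) :=
                  measure_iUnion_fintype_le _ _
              _ = ∑ _i : Fin d, ENNReal.ofReal (2 * (L * δ)) := by
                  exact Finset.sum_congr rfl fun i _ => Real.volume_closedBall _ _
              _ = (d : ENNReal) * ENNReal.ofReal (2 * (L * δ)) := by
                  rw [Finset.sum_const, card_univ, Fintype.card_fin, nsmul_eq_mul]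
              _ = ENNReal.ofReal ((d : ℝ) * (2 * (L * δ))) := by
                  rw [ENNReal.ofReal_mul (by positivity : (0:ℝ) ≤ (d:ℝ)), ENNReal.ofReal_natCast]
          calc ∏ j, volume (U k j)
              ≤ ∏ _j : Fin m, ENNReal.ofReal ((d : ℝ) * (2 * (L * δ))) :=
                Finset.prod_le_prod' fun j _ => hj j
            _ = ENNReal.ofReal ((d : ℝ) * (2 * (L * δ))) ^ m := by
                rw [Finset.prod_const, card_univ, Fintype.card_fin]
      _ = G.card • ENNReal.ofReal ((d : ℝ) * (2 * (L * δ))) ^ m := Finset.sum_const _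
      _ ≤ ENNReal.ofReal (C / N) := by
          rw [hcard, nsmul_eq_mul, ← ENNReal.ofReal_pow (by positivity),
            ← ENNReal.ofReal_natCast ((2 * N + 1) ^ n), ← ENNReal.ofReal_mul (by positivity)]
          apply ENNReal.ofReal_le_ofReal
          push_cast
          have hN1 : (1 : ℝ) ≤ N := by exact_mod_cast hN
          have e0 : (d : ℝ) * (2 * (L * δ)) = ((d : ℝ) * (2 * L * (R : ℝ))) / N := by
            rw [hδ]; ring
          rw [e0, div_pow, ← hP, hC, ← mul_div_assoc]
          rw [div_le_div_iff₀ (pow_pos hNpos m) hNpos]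
          have e2 : (2 * (N : ℝ) + 1) ^ n ≤ 3 ^ n * (N : ℝ) ^ n := by
            calc (2 * (N : ℝ) + 1) ^ n ≤ (3 * (N : ℝ)) ^ n :=
                  pow_le_pow_left₀ (by positivity) (by linarith) n
              _ = 3 ^ n * (N : ℝ) ^ n := mul_pow 3 _ n
          have e4 : (N : ℝ) ^ (n + 1) ≤ (N : ℝ) ^ m := pow_le_pow_right₀ hN1 hm
          calc (2 * (N : ℝ) + 1) ^ n * P * N ≤ (3 ^ n * (N : ℝ) ^ n) * P * N := by
                apply mul_le_mul_of_nonneg_right (mul_le_mul_of_nonneg_right e2 hP0) hNpos.le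
            _ = 3 ^ n * P * (N : ℝ) ^ (n + 1) := by ring
            _ ≤ 3 ^ n * P * (N : ℝ) ^ m := by
                apply mul_le_mul_of_nonneg_left e4 (by positivity)
  have t1 : Filter.Tendsto (fun N : ℕ => ENNReal.ofReal (C / N)) Filter.atTop (nhds 0) := by
    rw [← ENNReal.ofReal_zero]
    exact (ENNReal.continuous_ofReal.tendsto 0).comp (tendsto_const_div_atTop_nhds_zero_nat C)
  have hle : volume {lam : Fin m → ℝ | ∃ z : Fin n → ℝ, (∀ i, |z i| ≤ (R : ℝ)) ∧
      ∀ j, (lam j • (1 : Matrix (Fin d) (Fin d) ℝ) - S z j).det = 0} ≤ 0 := by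
    refine ge_of_tendsto t1 ?_
    filter_upwards [Filter.eventually_ge_atTop 1] with N hN using key N hN
  exact le_antisymm hle zero_le

/-- Let `X_1,…,X_n` be fixed real symmetric `d × d` matrices, `𝒜 ⊆ ℝ` finite and
`m ≥ n + 1`. Then there is a Lebesgue-null set `𝒞 ⊆ ℝᵐ` such that for all `λ ∉ 𝒞`,
all `z ∈ ℝⁿ` and all `A ∈ 𝒜^{n×m}`, at least one of the matrices
`M_j = -∑_i z_i X_i A_{ij} + λ_j I_d` is nonsingular. -/
theorem exists_null_set_one_matrix_nonsingular {n m d : ℕ} (hm : n + 1 ≤ m)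
    (X : Fin n → Matrix (Fin d) (Fin d) ℝ) (hX : ∀ i, (X i).IsSymm)
    (𝒜 : Finset ℝ) :
    ∃ 𝒞 : Set (Fin m → ℝ), volume 𝒞 = 0 ∧
      ∀ lam : Fin m → ℝ, lam ∉ 𝒞 →
        ∀ z : Fin n → ℝ, ∀ A : Fin n → Fin m → ℝ, (∀ i j, A i j ∈ 𝒜) →
          ∃ j, (-(∑ i, (z i * A i j) • X i) + lam j • (1 : Matrix (Fin d) (Fin d) ℝ)).det ≠ 0 := by
  classical
  refine ⟨{lam | ∃ (z : Fin n → ℝ) (A : Fin n → Fin m → ℝ), (∀ i j, A i j ∈ 𝒜) ∧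
    ∀ j, (-(∑ i, (z i * A i j) • X i) + lam j • (1 : Matrix (Fin d) (Fin d) ℝ)).det = 0}, ?_, ?_⟩
  · set F := (Fintype.piFinset fun _ : Fin n => Fintype.piFinset fun _ : Fin m => 𝒜) with hF
    have hsub : {lam : Fin m → ℝ | ∃ (z : Fin n → ℝ) (A : Fin n → Fin m → ℝ), (∀ i j, A i j ∈ 𝒜) ∧
        ∀ j, (-(∑ i, (z i * A i j) • X i) + lam j • (1 : Matrix (Fin d) (Fin d) ℝ)).det = 0}
        ⊆ ⋃ A ∈ (F : Set (Fin n → Fin m → ℝ)), ⋃ R : ℕ,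
          {lam : Fin m → ℝ | ∃ z : Fin n → ℝ, (∀ i, |z i| ≤ (R : ℝ)) ∧
            ∀ j, (lam j • (1 : Matrix (Fin d) (Fin d) ℝ) - ∑ i, (z i * A i j) • X i).det = 0} := by
      rintro lam ⟨z, A, hA, hdet⟩
      obtain ⟨R, hR⟩ := exists_nat_ge (∑ i, |z i|)
      have hAF : A ∈ (F : Set (Fin n → Fin m → ℝ)) := by
        rw [Finset.mem_coe, hF, Fintype.mem_piFinset]
        intro i
        rw [Fintype.mem_piFinset]
        exact fun j => hA i j
      refine Set.mem_biUnion hAF (Set.mem_iUnion.mpr ⟨R, z, fun i => ?_, fun j => ?_⟩)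
      · exact le_trans (Finset.single_le_sum (fun i _ => abs_nonneg (z i)) (mem_univ i)) hR
      · have h9 := hdet j
        rwa [neg_add_eq_sub] at h9
    refine measure_mono_null hsub ?_
    refine (measure_biUnion_null_iff (Finset.countable_toSet F)).mpr ?_
    intro A hA
    refine measure_iUnion_null fun R => ?_
    refine keynull' hm X hX A (∑ x ∈ 𝒜, |x|) ?_ R
    intro i j
    have hmem : A i j ∈ 𝒜 := by
      rw [Finset.mem_coe, hF, Fintype.mem_piFinset] at hA
      have h10 := hA i
      rw [Fintype.mem_piFinset] at h10
      exact h10 j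
    exact Finset.single_le_sum (fun x _ => abs_nonneg x) hmem
  · rintro lam hlam z A hA
    by_contra hc
    push_neg at hc
    exact hlam ⟨z, A, hA, fun j => hc j⟩
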